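/- Let ψ be a modal μ-calculus formula such that □ψ is in normal form, let κ : P → Set S be a valuation and s : S a state. Then Player 0 wins the model-checking parity game G(□ψ) from the vertex (□ψ, s) if and only if for every s' with R s s', Player 0 wins G(ψ) from (ψ, s'). -/

import Mathlib

/-- Formulas of the modal μ-calculus over a type `P` of propositional variables:
`⊥ | ⊤ | p | ¬p | φ∧φ | φ∨φ | □φ | ◇φ | μp.φ | νp.φ`. -/
inductive MuForm (P : Type*) where
  | bot : MuForm P
  | top : MuForm P
  | var (p : P) : MuForm P
  | nvar (p : P) : MuForm P
  | and (φ ψ : MuForm P) : MuForm P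
  | or (φ ψ : MuForm P) : MuForm P
  | box (φ : MuForm P) : MuForm P
  | dia (φ : MuForm P) : MuForm P
  | mu (p : P) (φ : MuForm P) : MuForm P
  | nu (p : P) (φ : MuForm P) : MuForm P
  deriving DecidableEq

variable {P S : Type*}

/-- The set of free variables of a μ-calculus formula (`μp`/`νp` bind `p`). -/
def MuForm.freeVars : MuForm P → Set P
  | .bot => ∅
  | .top => ∅
  | .var p => {p}
  | .nvar p => {p}
  | .and φ ψ => φ.freeVars ∪ ψ.freeVars
  | .or φ ψ => φ.freeVars ∪ ψ.freeVars
  | .box φ => φ.freeVars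
  | .dia φ => φ.freeVars
  | .mu p φ => φ.freeVars \ {p}
  | .nu p φ => φ.freeVars \ {p}

/-- `p` occurs only positively in a μ-calculus formula. -/
def MuForm.PositiveIn (p : P) : MuForm P → Prop
  | .bot => True
  | .top => True
  | .var _ => True
  | .nvar q => q ≠ p
  | .and φ ψ => φ.PositiveIn p ∧ ψ.PositiveIn p
  | .or φ ψ => φ.PositiveIn p ∧ ψ.PositiveIn p
  | .box φ => φ.PositiveIn p
  | .dia φ => φ.PositiveIn p
  | .mu q φ => q = p ∨ φ.PositiveIn p
  | .nu q φ => q = p ∨ φ.PositiveIn p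

/-- Semantics `⟦φ⟧κ ⊆ S` of a μ-calculus formula in the Kripke structure with
state type `S`, transition relation `R`, and valuation `κ : P → Set S`. -/
def MuForm.sem [DecidableEq P] (R : S → S → Prop) : MuForm P → (P → Set S) → Set S
  | .bot, _ => ∅
  | .top, _ => Set.univ
  | .var p, κ => κ p
  | .nvar p, κ => (κ p)ᶜ
  | .and φ ψ, κ => φ.sem R κ ∩ ψ.sem R κ
  | .or φ ψ, κ => φ.sem R κ ∪ ψ.sem R κ
  | .box φ, κ => {s | ∀ s', R s s' → s' ∈ φ.sem R κ}
  | .dia φ, κ => {s | ∃ s', R s s' ∧ s' ∈ φ.sem R κ}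
  | .mu p φ, κ => ⋂₀ {X : Set S | φ.sem R (Function.update κ p X) ⊆ X}
  | .nu p φ, κ => ⋃₀ {X : Set S | X ⊆ φ.sem R (Function.update κ p X)}
variable [DecidableEq P]

/-- The finite set of subformulas of a μ-calculus formula. -/
def MuForm.subformulas : MuForm P → Finset (MuForm P)
  | .bot => {.bot}
  | .top => {.top}
  | .var p => {.var p}
  | .nvar p => {.nvar p}
  | .and φ ψ => insert (.and φ ψ) (φ.subformulas ∪ ψ.subformulas)
  | .or φ ψ => insert (.or φ ψ) (φ.subformulas ∪ ψ.subformulas)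
  | .box φ => insert (.box φ) φ.subformulas
  | .dia φ => insert (.dia φ) φ.subformulas
  | .mu p φ => insert (.mu p φ) φ.subformulas
  | .nu p φ => insert (.nu p φ) φ.subformulas

/-- Size of a formula (used as a termination measure). -/
def MuForm.fsize : MuForm P → ℕ
  | .bot => 1
  | .top => 1
  | .var _ => 1
  | .nvar _ => 1
  | .and φ ψ => φ.fsize + ψ.fsize + 1
  | .or φ ψ => φ.fsize + ψ.fsize + 1
  | .box φ => φ.fsize + 1
  | .dia φ => φ.fsize + 1
  | .mu _ φ => φ.fsize + 1
  | .nu _ φ => φ.fsize + 1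

theorem MuForm.fsize_le_of_mem_subformulas :
    ∀ {φ ψ : MuForm P}, ψ ∈ φ.subformulas → ψ.fsize ≤ φ.fsize := by
  intro φ
  induction φ with
  | bot => intro ψ h; simp [MuForm.subformulas] at h; subst h; exact le_refl _
  | top => intro ψ h; simp [MuForm.subformulas] at h; subst h; exact le_refl _
  | var p => intro ψ h; simp [MuForm.subformulas] at h; subst h; exact le_refl _
  | nvar p => intro ψ h; simp [MuForm.subformulas] at h; subst h; exact le_refl _
  | and φ₁ φ₂ ih₁ ih₂ =>
      intro ψ h; simp [MuForm.subformulas] at h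
      rcases h with h | h | h
      · subst h; exact le_refl _
      · exact le_trans (ih₁ h) (by simp [MuForm.fsize]; omega)
      · exact le_trans (ih₂ h) (by simp [MuForm.fsize]; omega)
  | or φ₁ φ₂ ih₁ ih₂ =>
      intro ψ h; simp [MuForm.subformulas] at h
      rcases h with h | h | h
      · subst h; exact le_refl _
      · exact le_trans (ih₁ h) (by simp [MuForm.fsize]; omega)
      · exact le_trans (ih₂ h) (by simp [MuForm.fsize]; omega)
  | box φ ih =>
      intro ψ h; simp [MuForm.subformulas] at h
      rcases h with h | h
      · subst h; exact le_refl _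
      · exact le_trans (ih h) (by simp [MuForm.fsize])
  | dia φ ih =>
      intro ψ h; simp [MuForm.subformulas] at h
      rcases h with h | h
      · subst h; exact le_refl _
      · exact le_trans (ih h) (by simp [MuForm.fsize])
  | mu p φ ih =>
      intro ψ h; simp [MuForm.subformulas] at h
      rcases h with h | h
      · subst h; exact le_refl _
      · exact le_trans (ih h) (by simp [MuForm.fsize])
  | nu p φ ih =>
      intro ψ h; simp [MuForm.subformulas] at h
      rcases h with h | h
      · subst h; exact le_refl _
      · exact le_trans (ih h) (by simp [MuForm.fsize])

open Classical in
/-- The alternation depth `α(φ)` of a μ-calculus formula.  For `μp.ψ` it is the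
maximum of `{1, α(ψ)}` together with all values `α(νp'.ψ') + 1` for ν-subformulas
`νp'.ψ'` of `ψ` in which `p` occurs free, and dually for `νp.ψ`. -/
noncomputable def MuForm.alt : MuForm P → ℕ
  | .bot => 0
  | .top => 0
  | .var _ => 0
  | .nvar _ => 0
  | .and φ ψ => max φ.alt ψ.alt
  | .or φ ψ => max φ.alt ψ.alt
  | .box φ => φ.alt
  | .dia φ => φ.alt
  | .mu p φ => max (max 1 φ.alt)
      (φ.subformulas.attach.sup fun ψ =>
        if (∃ p' ψ', ψ.1 = MuForm.nu p' ψ') ∧ p ∈ ψ.1.freeVars then ψ.1.alt + 1 else 0)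
  | .nu p φ => max (max 1 φ.alt)
      (φ.subformulas.attach.sup fun ψ =>
        if (∃ p' ψ', ψ.1 = MuForm.mu p' ψ') ∧ p ∈ ψ.1.freeVars then ψ.1.alt + 1 else 0)
termination_by φ => φ.fsize
decreasing_by
  all_goals simp [MuForm.fsize]
  all_goals try omega
  all_goals
    have := MuForm.fsize_le_of_mem_subformulas ψ.2
    omega

/-- A parity game: vertices `V`, each owned by Player `0` or Player `1`,
an edge relation `E`, and a priority function `prio` with finite range. -/
structure ParityGame (V : Type*) where
  owner : V → Fin 2
  E : V → V → Prop
  prio : V → ℕ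
  finRange : (Set.range prio).Finite

namespace ParityGame

variable {V : Type*} (G : ParityGame V)

/-- A dead end: a vertex without `E`-successor. -/
def DeadEnd (v : V) : Prop := ∀ w, ¬ G.E v w

/-- `π : ℕ → V` is an infinite play (all consecutive steps are edges). -/
def InfPlay (π : ℕ → V) : Prop := ∀ i, G.E (π i) (π (i + 1))

/-- The set of priorities occurring infinitely often along an infinite play. -/
def InfOften (π : ℕ → V) : Set ℕ := {c | ∀ N, ∃ n, N ≤ n ∧ G.prio (π n) = c}

/-- An infinite play is won by Player `0` iff the maximum priority occurring
infinitely often is even (max-parity condition). -/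
def WinInf (π : ℕ → V) : Prop := Even (sSup (G.InfOften π))

/-- `l` is a finite play from `v`: a nonempty list starting at `v`, with
consecutive `E`-edges, whose last vertex is a dead end. -/
def FinPlay (v : V) (l : List V) : Prop :=
  l.head? = some v ∧ l.Chain' G.E ∧ ∀ x ∈ l.getLast?, G.DeadEnd x

/-- A finite play is won by Player `0` iff its last vertex belongs to Player `1`. -/
def WinFin (l : List V) : Prop := ∀ x ∈ l.getLast?, G.owner x = 1

/-- A strategy (for Player `0`) is valid if it assigns to every finite nonempty
`E`-path ending in a Player-`0` vertex that is not a dead end an `E`-successor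
of that vertex. -/
def ValidStrat (σ : List V → V) : Prop :=
  ∀ (l : List V) (x : V), l.Chain' G.E → l.getLast? = some x →
    G.owner x = 0 → ¬ G.DeadEnd x → G.E x (σ l)

/-- An infinite play conforms to a strategy `σ` if every step taken from a
Player-`0` vertex follows `σ` applied to the path traversed so far. -/
def ConformsInf (σ : List V → V) (π : ℕ → V) : Prop :=
  ∀ i, G.owner (π i) = 0 → π (i + 1) = σ (List.ofFn fun j : Fin (i + 1) => π j)

/-- A finite play conforms to a strategy `σ` if every step taken from a
Player-`0` vertex follows `σ` applied to the path traversed so far. -/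
def ConformsFin (σ : List V → V) (l : List V) : Prop :=
  ∀ (i : ℕ) (h : i + 1 < l.length),
    G.owner (l.get ⟨i, Nat.lt_of_succ_lt h⟩) = 0 →
    l.get ⟨i + 1, h⟩ = σ (l.take (i + 1))

/-- `σ` is a winning strategy for Player `0` from `v`: it is a valid strategy
and every (infinite or finite) play from `v` conforming to it is won by
Player `0`. -/
def WinningFrom (σ : List V → V) (v : V) : Prop :=
  G.ValidStrat σ ∧
    (∀ π : ℕ → V, π 0 = v → G.InfPlay π → G.ConformsInf σ π → G.WinInf π) ∧
    (∀ l : List V, G.FinPlay v l → G.ConformsFin σ l → G.WinFin l)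

/-- Player `0` wins the game from `v` if some strategy is winning for
Player `0` from `v`. -/
def Wins0 (v : V) : Prop := ∃ σ : List V → V, G.WinningFrom σ v

/-- A strategy is memoryless if its value depends only on the last vertex of
the path. -/
def Memoryless (σ : List V → V) : Prop :=
  ∀ (l l' : List V) (x : V), l.getLast? = some x → l'.getLast? = some x → σ l = σ l'

end ParityGame

theorem MuForm.self_mem_subformulas (φ : MuForm P) : φ ∈ φ.subformulas := by
  cases φ <;> simp [MuForm.subformulas]

/-- `p` is bound in `φ`: some fixpoint subformula of `φ` binds `p`. -/
def MuForm.BoundIn (p : P) (φ : MuForm P) : Prop :=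
  ∃ ψ, MuForm.mu p ψ ∈ φ.subformulas ∨ MuForm.nu p ψ ∈ φ.subformulas

/-- `φ` is in normal form: every variable is bound by at most one fixpoint
operator occurring in `φ` (the fixpoint subformula binding a given variable is
unique), and no variable occurs both free and bound in `φ`. -/
def MuForm.NormalForm (φ : MuForm P) : Prop :=
  (∀ (p : P) (χ₁ χ₂ : MuForm P), χ₁ ∈ φ.subformulas → χ₂ ∈ φ.subformulas →
      (∃ ψ, χ₁ = MuForm.mu p ψ ∨ χ₁ = MuForm.nu p ψ) →
      (∃ ψ, χ₂ = MuForm.mu p ψ ∨ χ₂ = MuForm.nu p ψ) → χ₁ = χ₂) ∧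
    ∀ p ∈ φ.freeVars, ¬ MuForm.BoundIn p φ

/-- The vertices `(ψ, s)` of the model-checking game for `φ` that belong to
Player `0`: `ψ` is `⊥`, a disjunction, a `◇`-formula, a `μ`- or `ν`-formula, a
variable bound in `φ`, a variable `p` free in `φ` with `s ∉ κ p`, or a literal
`¬p` with `s ∈ κ p`. -/
def mcPlayer0 (φ : MuForm P) (κ : P → Set S) : MuForm P × S → Prop :=
  fun v => match v.1 with
  | .bot => True
  | .top => False
  | .var p => MuForm.BoundIn p φ ∨ (p ∈ φ.freeVars ∧ v.2 ∉ κ p)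
  | .nvar p => v.2 ∈ κ p
  | .and _ _ => False
  | .or _ _ => True
  | .box _ => False
  | .dia _ => True
  | .mu _ _ => True
  | .nu _ _ => True

/-- The edges of the model-checking game for `φ`: from `(ψ₁∧ψ₂, s)` and
`(ψ₁∨ψ₂, s)` to `(ψ₁, s)` and `(ψ₂, s)`; from `(□ψ, s)` and `(◇ψ, s)` to
`(ψ, s')` for every `s'` with `R s s'`; from `(μp.ψ, s)` and `(νp.ψ, s)` to
`(ψ, s)`; from `(p, s)` to `(φ_p, s)` where `φ_p` is the fixpoint subformula of
`φ` binding `p`; no edges from `(⊥, s)`, `(⊤, s)`, `(¬p, s)`, or `(p, s)` with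
`p` free in `φ`. -/
def mcEdge (R : S → S → Prop) (φ : MuForm P) :
    MuForm P × S → MuForm P × S → Prop :=
  fun v w => match v.1 with
  | .bot => False
  | .top => False
  | .var p => w.2 = v.2 ∧ w.1 ∈ φ.subformulas ∧
      ∃ ψ, w.1 = MuForm.mu p ψ ∨ w.1 = MuForm.nu p ψ
  | .nvar _ => False
  | .and ψ₁ ψ₂ => w.2 = v.2 ∧ (w.1 = ψ₁ ∨ w.1 = ψ₂)
  | .or ψ₁ ψ₂ => w.2 = v.2 ∧ (w.1 = ψ₁ ∨ w.1 = ψ₂)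
  | .box ψ => w.1 = ψ ∧ R v.2 w.2
  | .dia ψ => w.1 = ψ ∧ R v.2 w.2
  | .mu _ ψ => w.2 = v.2 ∧ w.1 = ψ
  | .nu _ ψ => w.2 = v.2 ∧ w.1 = ψ

/-- The priority of a vertex `(ψ, s)` of the model-checking game:
`2⌈α(ψ)/2⌉ − 1` if `ψ` is a `μ`-formula with `α(ψ) > 0`, `2⌊α(ψ)/2⌋` if `ψ` is
a `ν`-formula with `α(ψ) > 0`, and `0` otherwise. -/
noncomputable def mcPrio : MuForm P → ℕ
  | .mu p ψ => if 0 < (MuForm.mu p ψ).alt then 2 * (((MuForm.mu p ψ).alt + 1) / 2) - 1 else 0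
  | .nu p ψ => if 0 < (MuForm.nu p ψ).alt then 2 * ((MuForm.nu p ψ).alt / 2) else 0
  | _ => 0

open Classical in
/-- The model-checking parity game `G(φ)` for a μ-calculus formula `φ` (in
normal form), a Kripke structure with transition relation `R`, and a valuation
`κ`: its vertices are the pairs `(ψ, s)` with `ψ` a subformula of `φ` and `s`
a state. -/
noncomputable def mcGame (R : S → S → Prop) (φ : MuForm P) (κ : P → Set S) :
    ParityGame ({ψ : MuForm P // ψ ∈ φ.subformulas} × S) where
  owner := fun v => if mcPlayer0 φ κ (v.1.1, v.2) then 0 else 1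
  E := fun v w => mcEdge R φ (v.1.1, v.2) (w.1.1, w.2)
  prio := fun v => mcPrio v.1.1
  finRange := by
    have h : (Set.range fun ψ : {ψ : MuForm P // ψ ∈ φ.subformulas} =>
        mcPrio ψ.1).Finite := Set.finite_range _
    exact h.subset (by rintro _ ⟨v, rfl⟩; exact ⟨v.1, rfl⟩)


namespace MCBoxAux

variable {P : Type*} {S : Type*} [DecidableEq P]

theorem subf_trans : ∀ {φ χ : MuForm P}, χ ∈ φ.subformulas → χ.subformulas ⊆ φ.subformulas := by
  intro φ
  induction φ with
  | bot => intro χ h; simp [MuForm.subformulas] at h; subst h; exact subset_rfl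
  | top => intro χ h; simp [MuForm.subformulas] at h; subst h; exact subset_rfl
  | var p => intro χ h; simp [MuForm.subformulas] at h; subst h; exact subset_rfl
  | nvar p => intro χ h; simp [MuForm.subformulas] at h; subst h; exact subset_rfl
  | and φ₁ φ₂ ih₁ ih₂ =>
      intro χ h; simp [MuForm.subformulas] at h
      rcases h with rfl | h | h
      · exact subset_rfl
      · intro x hx; simp [MuForm.subformulas]; exact Or.inr (Or.inl (ih₁ h hx))
      · intro x hx; simp [MuForm.subformulas]; exact Or.inr (Or.inr (ih₂ h hx))
  | or φ₁ φ₂ ih₁ ih₂ =>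
      intro χ h; simp [MuForm.subformulas] at h
      rcases h with rfl | h | h
      · exact subset_rfl
      · intro x hx; simp [MuForm.subformulas]; exact Or.inr (Or.inl (ih₁ h hx))
      · intro x hx; simp [MuForm.subformulas]; exact Or.inr (Or.inr (ih₂ h hx))
  | box φ ih =>
      intro χ h; simp [MuForm.subformulas] at h
      rcases h with rfl | h
      · exact subset_rfl
      · intro x hx; simp [MuForm.subformulas]; exact Or.inr (ih h hx)
  | dia φ ih =>
      intro χ h; simp [MuForm.subformulas] at h
      rcases h with rfl | h
      · exact subset_rfl
      · intro x hx; simp [MuForm.subformulas]; exact Or.inr (ih h hx)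
  | mu p φ ih =>
      intro χ h; simp [MuForm.subformulas] at h
      rcases h with rfl | h
      · exact subset_rfl
      · intro x hx; simp [MuForm.subformulas]; exact Or.inr (ih h hx)
  | nu p φ ih =>
      intro χ h; simp [MuForm.subformulas] at h
      rcases h with rfl | h
      · exact subset_rfl
      · intro x hx; simp [MuForm.subformulas]; exact Or.inr (ih h hx)

theorem box_not_mem (ψ : MuForm P) : MuForm.box ψ ∉ ψ.subformulas := by
  intro h
  have := MuForm.fsize_le_of_mem_subformulas h
  simp [MuForm.fsize] at this

theorem boundIn_box_iff (p : P) (ψ : MuForm P) :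
    MuForm.BoundIn p (MuForm.box ψ) ↔ MuForm.BoundIn p ψ := by
  simp [MuForm.BoundIn, MuForm.subformulas]

theorem player0_box_iff (ψ : MuForm P) (κ : P → Set S) (χ : MuForm P) (t : S) :
    mcPlayer0 (MuForm.box ψ) κ (χ, t) ↔ mcPlayer0 ψ κ (χ, t) := by
  cases χ <;> simp [mcPlayer0, MuForm.freeVars, boundIn_box_iff]

/-- Embedding of vertices of `G(ψ)` into vertices of `G(□ψ)`. -/
def emb (ψ : MuForm P) (v : {χ : MuForm P // χ ∈ ψ.subformulas} × S) :
    {χ : MuForm P // χ ∈ (MuForm.box ψ).subformulas} × S :=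
  (⟨v.1.1, by simp only [MuForm.subformulas, Finset.mem_insert]; exact Or.inr v.1.2⟩, v.2)

theorem emb_inj (ψ : MuForm P) : Function.Injective (emb (S := S) ψ) := by
  rintro ⟨⟨a, ha⟩, t⟩ ⟨⟨b, hb⟩, u⟩ h
  simp only [emb, Prod.mk.injEq, Subtype.mk.injEq] at h
  obtain ⟨rfl, rfl⟩ := h
  rfl

theorem edge_box_iff (R : S → S → Prop) (ψ : MuForm P) (χ : MuForm P) (t : S)
    (w : {c : MuForm P // c ∈ ψ.subformulas} × S) :
    mcEdge R (MuForm.box ψ) (χ, t) (w.1.1, w.2) ↔ mcEdge R ψ (χ, t) (w.1.1, w.2) := by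
  cases χ <;> simp [mcEdge, MuForm.subformulas, w.1.2]

theorem edge_box_closed (R : S → S → Prop) (ψ : MuForm P) {χ : MuForm P}
    (hχ : χ ∈ ψ.subformulas) {t : S} {w : MuForm P × S} :
    mcEdge R (MuForm.box ψ) (χ, t) w → w.1 ∈ ψ.subformulas := by
  cases χ with
  | bot => exact fun h => h.elim
  | top => exact fun h => h.elim
  | nvar p => exact fun h => h.elim
  | var p =>
      rintro ⟨-, hmem, χ', hc⟩
      simp only [MuForm.subformulas, Finset.mem_insert] at hmem
      rcases hmem with heq | h
      · exfalso; rw [heq] at hc; rcases hc with hc | hc <;> simp at hc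
      · exact h
  | and χ₁ χ₂ =>
      rintro ⟨-, rfl | rfl⟩ <;>
        exact subf_trans hχ (by simp [MuForm.subformulas, MuForm.self_mem_subformulas])
  | or χ₁ χ₂ =>
      rintro ⟨-, rfl | rfl⟩ <;>
        exact subf_trans hχ (by simp [MuForm.subformulas, MuForm.self_mem_subformulas])
  | box χ' =>
      rintro ⟨h1, -⟩
      exact h1 ▸ subf_trans hχ (by simp [MuForm.subformulas, MuForm.self_mem_subformulas])
  | dia χ' =>
      rintro ⟨h1, -⟩
      exact h1 ▸ subf_trans hχ (by simp [MuForm.subformulas, MuForm.self_mem_subformulas])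
  | mu p χ' =>
      rintro ⟨-, h1⟩
      exact h1 ▸ subf_trans hχ (by simp [MuForm.subformulas, MuForm.self_mem_subformulas])
  | nu p χ' =>
      rintro ⟨-, h1⟩
      exact h1 ▸ subf_trans hχ (by simp [MuForm.subformulas, MuForm.self_mem_subformulas])

end MCBoxAux
namespace MCBoxAux

variable {P : Type*} {S : Type*} [DecidableEq P]

theorem owner_emb (R : S → S → Prop) (ψ : MuForm P) (κ : P → Set S)
    (v : {χ : MuForm P // χ ∈ ψ.subformulas} × S) :
    (mcGame R (MuForm.box ψ) κ).owner (emb ψ v) = (mcGame R ψ κ).owner v := by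
  classical
  simp only [mcGame]
  exact if_congr (player0_box_iff ψ κ v.1.1 v.2) rfl rfl

theorem prio_emb (R : S → S → Prop) (ψ : MuForm P) (κ : P → Set S)
    (v : {χ : MuForm P // χ ∈ ψ.subformulas} × S) :
    (mcGame R (MuForm.box ψ) κ).prio (emb ψ v) = (mcGame R ψ κ).prio v := rfl

theorem edge_emb_iff (R : S → S → Prop) (ψ : MuForm P) (κ : P → Set S)
    (v w : {χ : MuForm P // χ ∈ ψ.subformulas} × S) :
    (mcGame R (MuForm.box ψ) κ).E (emb ψ v) (emb ψ w) ↔ (mcGame R ψ κ).E v w :=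
  edge_box_iff R ψ v.1.1 v.2 w

theorem edge_emb_lift (R : S → S → Prop) (ψ : MuForm P) (κ : P → Set S)
    (v : {χ : MuForm P // χ ∈ ψ.subformulas} × S)
    (w : {χ : MuForm P // χ ∈ (MuForm.box ψ).subformulas} × S)
    (h : (mcGame R (MuForm.box ψ) κ).E (emb ψ v) w) :
    ∃ w', w = emb ψ w' := by
  have hm : w.1.1 ∈ ψ.subformulas := edge_box_closed R ψ v.1.2 h
  refine ⟨(⟨w.1.1, hm⟩, w.2), ?_⟩
  obtain ⟨⟨w1, hw1⟩, w2⟩ := w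
  simp [emb]

theorem dead_emb_iff (R : S → S → Prop) (ψ : MuForm P) (κ : P → Set S)
    (v : {χ : MuForm P // χ ∈ ψ.subformulas} × S) :
    (mcGame R (MuForm.box ψ) κ).DeadEnd (emb ψ v) ↔ (mcGame R ψ κ).DeadEnd v := by
  constructor
  · intro h w hw
    exact h (emb ψ w) ((edge_emb_iff R ψ κ v w).mpr hw)
  · intro h w hw
    obtain ⟨w', rfl⟩ := edge_emb_lift R ψ κ v w hw
    exact h w' ((edge_emb_iff R ψ κ v w').mp hw)

open Classical in
/-- Fallback strategy: pick an arbitrary successor of the last vertex. -/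
noncomputable def fb {V : Type*} (G : ParityGame V) (d : V) (l : List V) : V :=
  if h : ∃ w x, l.getLast? = some x ∧ G.E x w then h.choose else d

theorem fb_spec {V : Type*} (G : ParityGame V) (d : V) {l : List V} {x : V}
    (hx : l.getLast? = some x) (hnd : ¬ G.DeadEnd x) : G.E x (fb G d l) := by
  have hex : ∃ w, G.E x w := by
    by_contra hc; push_neg at hc; exact hnd fun w => hc w
  obtain ⟨w, hw⟩ := hex
  have h : ∃ w x', l.getLast? = some x' ∧ G.E x' w := ⟨w, x, hx, hw⟩
  rw [fb, dif_pos h]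
  obtain ⟨x', hx', he⟩ := h.choose_spec
  rw [hx] at hx'
  injection hx' with h2
  rw [h2]
  exact he

theorem winInf_shift {V₁ V₂ : Type*} (G₁ : ParityGame V₁) (G₂ : ParityGame V₂)
    (π₁ : ℕ → V₁) (π : ℕ → V₂) (hpr : ∀ n, G₁.prio (π₁ (n + 1)) = G₂.prio (π n)) :
    G₁.WinInf π₁ ↔ G₂.WinInf π := by
  have h : G₁.InfOften π₁ = G₂.InfOften π := by
    ext c
    constructor
    · intro h N
      obtain ⟨n, hn, hc⟩ := h (N + 1)
      obtain ⟨m, rfl⟩ : ∃ m, n = m + 1 := ⟨n - 1, by omega⟩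
      exact ⟨m, by omega, by rw [← hpr m]; exact hc⟩
    · intro h N
      obtain ⟨n, hn, hc⟩ := h N
      exact ⟨n + 1, by omega, by rw [hpr n]; exact hc⟩
  unfold ParityGame.WinInf
  rw [h]

theorem chain'_ofFn_play {V : Type*} (E : V → V → Prop) (π : ℕ → V)
    (h : ∀ i, E (π i) (π (i + 1))) (n : ℕ) :
    (List.ofFn fun j : Fin n => π j).Chain' E := by
  unfold List.Chain'
  rw [List.isChain_iff_getElem]
  intro i hi
  simp only [List.getElem_ofFn, Fin.coe_cast]
  exact h i

theorem getLast?_ofFn_succ {α : Type*} {n : ℕ} (f : Fin (n + 1) → α) :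
    (List.ofFn f).getLast? = some (f ⟨n, Nat.lt_succ_self n⟩) := by
  rw [List.getLast?_eq_getElem?, List.length_ofFn]
  simp only [Nat.add_sub_cancel, List.getElem?_ofFn, List.ofFnNthVal]
  rw [dif_pos (Nat.lt_succ_self n)]

theorem getLast?_take_succ {α : Type*} (l : List α) (n : ℕ) (h : n + 1 < l.length)
    (x : α) (hx : l.get ⟨n, by omega⟩ = x) : (l.take (n + 1)).getLast? = some x := by
  rw [List.getLast?_eq_getElem?]
  have h1 : n + 1 ≤ l.length := by omega
  simp only [List.length_take, Nat.min_eq_left h1, Nat.add_sub_cancel, List.getElem?_take,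
    Nat.lt_succ_self, if_pos]
  rw [List.getElem?_eq_getElem (by omega)]
  simp [← hx, List.get_eq_getElem]

end MCBoxAux
namespace MCBoxAux

variable {P : Type*} {S : Type*} [DecidableEq P]

theorem owner_v0 (R : S → S → Prop) (ψ : MuForm P) (κ : P → Set S) (s : S) :
    (mcGame R (MuForm.box ψ) κ).owner
      (⟨MuForm.box ψ, (MuForm.box ψ).self_mem_subformulas⟩, s) = 1 := by
  simp [mcGame, mcPlayer0]

theorem edge_v0 (R : S → S → Prop) (ψ : MuForm P) (κ : P → Set S) (s : S) (s' : S)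
    (hs' : R s s') :
    (mcGame R (MuForm.box ψ) κ).E (⟨MuForm.box ψ, (MuForm.box ψ).self_mem_subformulas⟩, s)
      (emb ψ (⟨ψ, ψ.self_mem_subformulas⟩, s')) :=
  ⟨rfl, hs'⟩

theorem first_lift (R : S → S → Prop) (ψ : MuForm P) (κ : P → Set S) (s : S)
    (w : {χ : MuForm P // χ ∈ (MuForm.box ψ).subformulas} × S)
    (h : (mcGame R (MuForm.box ψ) κ).E
      (⟨MuForm.box ψ, (MuForm.box ψ).self_mem_subformulas⟩, s) w) :
    R s w.2 ∧ w = emb ψ (⟨ψ, ψ.self_mem_subformulas⟩, w.2) := by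
  obtain ⟨h1, h2⟩ := h
  refine ⟨h2, ?_⟩
  obtain ⟨⟨w1, hw1⟩, w2⟩ := w
  simp only at h1
  subst h1
  simp [emb]

theorem chain_lift (R : S → S → Prop) (ψ : MuForm P) (κ : P → Set S) :
    ∀ (rest : List ({χ : MuForm P // χ ∈ (MuForm.box ψ).subformulas} × S))
      (v : {χ : MuForm P // χ ∈ ψ.subformulas} × S),
      ((emb ψ v) :: rest).Chain' (mcGame R (MuForm.box ψ) κ).E →
      ∃ l', rest = List.map (emb ψ) l' := by
  intro rest
  induction rest with
  | nil => exact fun v _ => ⟨[], rfl⟩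
  | cons w t ih =>
      intro v hch
      unfold List.Chain' at hch
      rw [List.isChain_cons] at hch
      obtain ⟨h1, h2⟩ := hch
      have hE : (mcGame R (MuForm.box ψ) κ).E (emb ψ v) w := h1 w rfl
      obtain ⟨w', rfl⟩ := edge_emb_lift R ψ κ v w hE
      obtain ⟨l'', rfl⟩ := ih w' h2
      exact ⟨w' :: l'', rfl⟩

open Classical in
/-- Strategy for Player 0 in `G(ψ)` obtained from a strategy `σ` in `G(□ψ)`. -/
noncomputable def fwdStrat (R : S → S → Prop) (ψ : MuForm P) (κ : P → Set S) (s s' : S)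
    (σ : List ({χ : MuForm P // χ ∈ (MuForm.box ψ).subformulas} × S) →
      {χ : MuForm P // χ ∈ (MuForm.box ψ).subformulas} × S)
    (l : List ({χ : MuForm P // χ ∈ ψ.subformulas} × S)) :
    {χ : MuForm P // χ ∈ ψ.subformulas} × S :=
  if h : ((⟨MuForm.box ψ, (MuForm.box ψ).self_mem_subformulas⟩, s) :: l.map (emb ψ)).Chain'
        (mcGame R (MuForm.box ψ) κ).E ∧
      ∃ w', σ ((⟨MuForm.box ψ, (MuForm.box ψ).self_mem_subformulas⟩, s) :: l.map (emb ψ)) =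
        emb ψ w'
  then h.2.choose
  else fb (mcGame R ψ κ) (⟨ψ, ψ.self_mem_subformulas⟩, s') l

theorem fwdStrat_eq (R : S → S → Prop) (ψ : MuForm P) (κ : P → Set S) (s s' : S)
    (σ : List ({χ : MuForm P // χ ∈ (MuForm.box ψ).subformulas} × S) →
      {χ : MuForm P // χ ∈ (MuForm.box ψ).subformulas} × S)
    (hσ : (mcGame R (MuForm.box ψ) κ).ValidStrat σ)
    {l : List ({χ : MuForm P // χ ∈ ψ.subformulas} × S)}
    {x : {χ : MuForm P // χ ∈ ψ.subformulas} × S}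
    (hchain : ((⟨MuForm.box ψ, (MuForm.box ψ).self_mem_subformulas⟩, s) :: l.map (emb ψ)).Chain'
      (mcGame R (MuForm.box ψ) κ).E)
    (hlast : l.getLast? = some x)
    (hown : (mcGame R ψ κ).owner x = 0) (hnd : ¬ (mcGame R ψ κ).DeadEnd x) :
    emb ψ (fwdStrat R ψ κ s s' σ l) =
        σ ((⟨MuForm.box ψ, (MuForm.box ψ).self_mem_subformulas⟩, s) :: l.map (emb ψ)) ∧
      (mcGame R ψ κ).E x (fwdStrat R ψ κ s s' σ l) := by
  have hlast₁ : ((⟨MuForm.box ψ, (MuForm.box ψ).self_mem_subformulas⟩, s) ::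
      l.map (emb ψ)).getLast? = some (emb ψ x) := by
    have hmap : (l.map (emb ψ)).getLast? = some (emb ψ x) := by
      rw [List.getLast?_map, hlast]; rfl
    cases l with
    | nil => simp at hlast
    | cons y t =>
        simp only [List.map_cons] at hmap ⊢
        rw [List.getLast?_cons_cons]
        exact hmap
  have hE : (mcGame R (MuForm.box ψ) κ).E (emb ψ x)
      (σ ((⟨MuForm.box ψ, (MuForm.box ψ).self_mem_subformulas⟩, s) :: l.map (emb ψ))) :=
    hσ _ (emb ψ x) hchain hlast₁ (by rw [owner_emb]; exact hown)
      (fun hd => hnd ((dead_emb_iff R ψ κ x).mp hd))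
  obtain ⟨w', hw'⟩ := edge_emb_lift R ψ κ x _ hE
  have hcond : ((⟨MuForm.box ψ, (MuForm.box ψ).self_mem_subformulas⟩, s) :: l.map (emb ψ)).Chain'
        (mcGame R (MuForm.box ψ) κ).E ∧
      ∃ w', σ ((⟨MuForm.box ψ, (MuForm.box ψ).self_mem_subformulas⟩, s) :: l.map (emb ψ)) =
        emb ψ w' := ⟨hchain, w', hw'⟩
  have key : fwdStrat R ψ κ s s' σ l = hcond.2.choose := by
    unfold fwdStrat
    rw [dif_pos hcond]
  have hspec := hcond.2.choose_spec
  refine ⟨by rw [key]; exact hspec.symm, ?_⟩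
  rw [key]
  have hE' : (mcGame R (MuForm.box ψ) κ).E (emb ψ x) (emb ψ hcond.2.choose) := by
    rw [← hspec]; exact hE
  exact (edge_emb_iff R ψ κ x hcond.2.choose).mp hE'

open Classical in
/-- A winning strategy for Player 0 in `G(ψ)` from `(ψ, s')`, if one exists. -/
noncomputable def pickStrat (R : S → S → Prop) (ψ : MuForm P) (κ : P → Set S) (s' : S) :
    List ({χ : MuForm P // χ ∈ ψ.subformulas} × S) →
      {χ : MuForm P // χ ∈ ψ.subformulas} × S :=
  if h : (mcGame R ψ κ).Wins0 (⟨ψ, ψ.self_mem_subformulas⟩, s') then h.choose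
  else fun _ => (⟨ψ, ψ.self_mem_subformulas⟩, s')

theorem pickStrat_spec (R : S → S → Prop) (ψ : MuForm P) (κ : P → Set S) (s' : S)
    (h : (mcGame R ψ κ).Wins0 (⟨ψ, ψ.self_mem_subformulas⟩, s')) :
    (mcGame R ψ κ).WinningFrom (pickStrat R ψ κ s') (⟨ψ, ψ.self_mem_subformulas⟩, s') := by
  unfold pickStrat
  rw [dif_pos h]
  exact h.choose_spec

open Classical in
/-- Strategy for Player 0 in `G(□ψ)` from `(□ψ, s)` built from winning strategies in `G(ψ)`. -/
noncomputable def bwdStrat (R : S → S → Prop) (ψ : MuForm P) (κ : P → Set S) (s : S)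
    (l : List ({χ : MuForm P // χ ∈ (MuForm.box ψ).subformulas} × S)) :
    {χ : MuForm P // χ ∈ (MuForm.box ψ).subformulas} × S :=
  if h : ∃ (s' : S) (l' : List ({χ : MuForm P // χ ∈ ψ.subformulas} × S)),
      R s s' ∧ l'.head? = some (⟨ψ, ψ.self_mem_subformulas⟩, s') ∧
      l = (⟨MuForm.box ψ, (MuForm.box ψ).self_mem_subformulas⟩, s) :: l'.map (emb ψ)
  then emb ψ (pickStrat R ψ κ h.choose (h.choose_spec.choose))
  else fb (mcGame R (MuForm.box ψ) κ)
    (⟨MuForm.box ψ, (MuForm.box ψ).self_mem_subformulas⟩, s) l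

theorem bwdStrat_eq (R : S → S → Prop) (ψ : MuForm P) (κ : P → Set S) (s : S)
    {l : List ({χ : MuForm P // χ ∈ (MuForm.box ψ).subformulas} × S)} {s' : S}
    {l' : List ({χ : MuForm P // χ ∈ ψ.subformulas} × S)}
    (hR : R s s') (hh : l'.head? = some (⟨ψ, ψ.self_mem_subformulas⟩, s'))
    (hl : l = (⟨MuForm.box ψ, (MuForm.box ψ).self_mem_subformulas⟩, s) :: l'.map (emb ψ)) :
    bwdStrat R ψ κ s l = emb ψ (pickStrat R ψ κ s' l') := by
  have h : ∃ (s' : S) (l' : List ({χ : MuForm P // χ ∈ ψ.subformulas} × S)),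
      R s s' ∧ l'.head? = some (⟨ψ, ψ.self_mem_subformulas⟩, s') ∧
      l = (⟨MuForm.box ψ, (MuForm.box ψ).self_mem_subformulas⟩, s) :: l'.map (emb ψ) :=
    ⟨s', l', hR, hh, hl⟩
  have key : bwdStrat R ψ κ s l = emb ψ (pickStrat R ψ κ h.choose (h.choose_spec.choose)) := by
    unfold bwdStrat
    rw [dif_pos h]
  obtain ⟨hR₀, hh₀, hl₀⟩ := h.choose_spec.choose_spec
  have hmap : (h.choose_spec.choose).map (emb ψ) = l'.map (emb ψ) := by
    have h3 := hl₀.symm.trans hl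
    injection h3
  have hls : h.choose_spec.choose = l' := List.map_injective_iff.mpr (emb_inj ψ) hmap
  have hs : h.choose = s' := by
    rw [hls] at hh₀
    rw [hh₀] at hh
    injection hh with h2
    exact congrArg Prod.snd h2
  rw [key, hls, hs]

end MCBoxAux
namespace MCBoxAux

variable {P : Type*} {S : Type*} [DecidableEq P]

theorem emb_eta (ψ : MuForm P) (w : {χ : MuForm P // χ ∈ (MuForm.box ψ).subformulas} × S)
    (h : w.1.1 ∈ ψ.subformulas) : w = emb ψ (⟨w.1.1, h⟩, w.2) := by
  obtain ⟨⟨a, ha⟩, t⟩ := w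
  simp [emb]

theorem chain_emb_iff (R : S → S → Prop) (ψ : MuForm P) (κ : P → Set S)
    (l : List ({χ : MuForm P // χ ∈ ψ.subformulas} × S)) :
    (l.map (emb ψ)).Chain' (mcGame R (MuForm.box ψ) κ).E ↔ l.Chain' (mcGame R ψ κ).E := by
  unfold List.Chain'
  rw [List.isChain_map]
  constructor
  · exact fun h => h.imp (fun {a b} hab => (edge_emb_iff R ψ κ a b).mp hab)
  · exact fun h => h.imp (fun {a b} hab => (edge_emb_iff R ψ κ a b).mpr hab)

theorem getLast_cons_map (ψ : MuForm P)
    (a : {χ : MuForm P // χ ∈ (MuForm.box ψ).subformulas} × S)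
    (l : List ({χ : MuForm P // χ ∈ ψ.subformulas} × S)) (h : l ≠ [])
    {x : {χ : MuForm P // χ ∈ ψ.subformulas} × S} (hx : l.getLast? = some x) :
    (a :: l.map (emb ψ)).getLast? = some (emb ψ x) := by
  cases l with
  | nil => exact absurd rfl h
  | cons y t =>
      simp only [List.map_cons]
      rw [List.getLast?_cons_cons, ← List.map_cons, List.getLast?_map, hx]
      rfl

end MCBoxAux
open MCBoxAux

/-- Player `0` wins the model-checking game `G(□ψ)` from `(□ψ, s)` iff for
every `s'` with `R s s'`, Player `0` wins `G(ψ)` from `(ψ, s')`. -/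
theorem mcGame_box_wins_iff (R : S → S → Prop) (ψ : MuForm P)
    (hnf : (MuForm.box ψ).NormalForm) (κ : P → Set S) (s : S) :
    (mcGame R (MuForm.box ψ) κ).Wins0
        (⟨MuForm.box ψ, (MuForm.box ψ).self_mem_subformulas⟩, s) ↔
      ∀ s' : S, R s s' →
        (mcGame R ψ κ).Wins0 (⟨ψ, ψ.self_mem_subformulas⟩, s') := by
  classical
  constructor
  · rintro ⟨σ, hval, hinf, hfin⟩ s' hs'
    refine ⟨fwdStrat R ψ κ s s' σ, ?_, ?_, ?_⟩
    · -- validity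
      intro l x hch hlast hown hnd
      by_cases hc : ((⟨MuForm.box ψ, (MuForm.box ψ).self_mem_subformulas⟩, s) ::
          l.map (emb ψ)).Chain' (mcGame R (MuForm.box ψ) κ).E
      · exact (fwdStrat_eq R ψ κ s s' σ hval hc hlast hown hnd).2
      · have heq : fwdStrat R ψ κ s s' σ l =
            fb (mcGame R ψ κ) (⟨ψ, ψ.self_mem_subformulas⟩, s') l := by
          unfold fwdStrat
          rw [dif_neg (fun hcond => hc hcond.1)]
        rw [heq]
        exact fb_spec _ _ hlast hnd
    · -- infinite plays
      intro π hπ0 hπ hconf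
      set π₁ : ℕ → {χ : MuForm P // χ ∈ (MuForm.box ψ).subformulas} × S :=
        fun n => Nat.casesOn n
          (⟨MuForm.box ψ, (MuForm.box ψ).self_mem_subformulas⟩, s)
          (fun m => emb ψ (π m)) with hπ₁def
      have hplay₁ : (mcGame R (MuForm.box ψ) κ).InfPlay π₁ := by
        intro i
        cases i with
        | zero =>
            show (mcGame R (MuForm.box ψ) κ).E _ (emb ψ (π 0))
            rw [hπ0]
            exact edge_v0 R ψ κ s s' hs'
        | succ m =>
            exact (edge_emb_iff R ψ κ (π m) (π (m + 1))).mpr (hπ m)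
      have hconf₁ : (mcGame R (MuForm.box ψ) κ).ConformsInf σ π₁ := by
        intro i howner
        cases i with
        | zero =>
            rw [show π₁ 0 = (⟨MuForm.box ψ, (MuForm.box ψ).self_mem_subformulas⟩, s) from rfl,
              owner_v0] at howner
            exact absurd howner (by decide)
        | succ i =>
            have ho₂ : (mcGame R ψ κ).owner (π i) = 0 := by
              rw [← owner_emb R ψ κ (π i)]
              exact howner
            have hstep := hconf i ho₂
            have hL : (List.ofFn fun j : Fin (i + 2) => π₁ j) =
                (⟨MuForm.box ψ, (MuForm.box ψ).self_mem_subformulas⟩, s) ::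
                  (List.ofFn fun j : Fin (i + 1) => π j).map (emb ψ) := by
              rw [List.map_ofFn, List.ofFn_succ]
              rfl
            have hchain : ((⟨MuForm.box ψ, (MuForm.box ψ).self_mem_subformulas⟩, s) ::
                (List.ofFn fun j : Fin (i + 1) => π j).map (emb ψ)).Chain'
                (mcGame R (MuForm.box ψ) κ).E := by
              rw [← hL]
              exact chain'_ofFn_play _ π₁ hplay₁ (i + 2)
            have hlast : (List.ofFn fun j : Fin (i + 1) => π j).getLast? = some (π i) :=
              getLast?_ofFn_succ _
            have hnd : ¬ (mcGame R ψ κ).DeadEnd (π i) := fun hd => hd (π (i + 1)) (hπ i)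
            have happ := fwdStrat_eq R ψ κ s s' σ hval hchain hlast ho₂ hnd
            show emb ψ (π (i + 1)) = σ (List.ofFn fun j : Fin (i + 2) => π₁ j)
            rw [hstep, hL]
            exact happ.1
      have hwin₁ := hinf π₁ rfl hplay₁ hconf₁
      exact (winInf_shift (mcGame R (MuForm.box ψ) κ) (mcGame R ψ κ) π₁ π
        (fun n => rfl)).mp hwin₁
    · -- finite plays
      intro l hfp hcf
      obtain ⟨hhead, hch, hdead⟩ := hfp
      have hlne : l ≠ [] := by intro h; rw [h] at hhead; simp at hhead
      have hch₁ : ((⟨MuForm.box ψ, (MuForm.box ψ).self_mem_subformulas⟩, s) ::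
          l.map (emb ψ)).Chain' (mcGame R (MuForm.box ψ) κ).E := by
        unfold List.Chain'
        rw [List.isChain_cons]
        constructor
        · intro y hy
          rw [List.head?_map, hhead] at hy
          simp only [Option.map_some, Option.mem_def, Option.some.injEq] at hy
          rw [← hy]
          exact edge_v0 R ψ κ s s' hs'
        · exact (chain_emb_iff R ψ κ l).mpr hch
      have hfp₁ : (mcGame R (MuForm.box ψ) κ).FinPlay
          (⟨MuForm.box ψ, (MuForm.box ψ).self_mem_subformulas⟩, s)
          ((⟨MuForm.box ψ, (MuForm.box ψ).self_mem_subformulas⟩, s) :: l.map (emb ψ)) := by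
        refine ⟨rfl, hch₁, ?_⟩
        intro x hx
        obtain ⟨z, hz⟩ : ∃ z, l.getLast? = some z := by
          cases hzz : l.getLast? with
          | none => exact absurd (List.getLast?_isSome.mpr hlne) (by rw [hzz]; simp)
          | some z => exact ⟨z, rfl⟩
        rw [getLast_cons_map ψ _ l hlne hz] at hx
        simp only [Option.mem_def, Option.some.injEq] at hx
        rw [← hx]
        exact (dead_emb_iff R ψ κ z).mpr (hdead z (by rw [hz]; rfl))
      have hcf₁ : (mcGame R (MuForm.box ψ) κ).ConformsFin σ
          ((⟨MuForm.box ψ, (MuForm.box ψ).self_mem_subformulas⟩, s) :: l.map (emb ψ)) := by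
        intro i hi howner
        cases i with
        | zero =>
            rw [show ((⟨MuForm.box ψ, (MuForm.box ψ).self_mem_subformulas⟩, s) ::
              l.map (emb ψ)).get ⟨0, Nat.lt_of_succ_lt hi⟩ =
              (⟨MuForm.box ψ, (MuForm.box ψ).self_mem_subformulas⟩, s) from rfl,
              owner_v0] at howner
            exact absurd howner (by decide)
        | succ i =>
            have hi' : i + 1 < l.length := by
              simp only [List.length_cons, List.length_map] at hi
              omega
            have hg : ((⟨MuForm.box ψ, (MuForm.box ψ).self_mem_subformulas⟩, s) ::
                l.map (emb ψ)).get ⟨i + 1, Nat.lt_of_succ_lt hi⟩ =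
                emb ψ (l.get ⟨i, by omega⟩) := by
              simp [List.get_eq_getElem, List.getElem_cons_succ, List.getElem_map]
            rw [hg, owner_emb] at howner
            have hstep := hcf i hi' howner
            have htake : ((⟨MuForm.box ψ, (MuForm.box ψ).self_mem_subformulas⟩, s) ::
                l.map (emb ψ)).take (i + 2) =
                (⟨MuForm.box ψ, (MuForm.box ψ).self_mem_subformulas⟩, s) ::
                  (l.take (i + 1)).map (emb ψ) := by
              simp [List.take_succ_cons, List.map_take]
            have hchain' : ((⟨MuForm.box ψ, (MuForm.box ψ).self_mem_subformulas⟩, s) ::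
                (l.take (i + 1)).map (emb ψ)).Chain' (mcGame R (MuForm.box ψ) κ).E := by
              rw [← htake]
              exact hch₁.take _
            have hlast' : (l.take (i + 1)).getLast? = some (l.get ⟨i, by omega⟩) :=
              getLast?_take_succ l i hi' _ rfl
            have hndx : ¬ (mcGame R ψ κ).DeadEnd (l.get ⟨i, by omega⟩) := by
              intro hd
              exact hd (l.get ⟨i + 1, hi'⟩) (List.isChain_iff_getElem.mp hch i (by omega))
            have happ := fwdStrat_eq R ψ κ s s' σ hval hchain' hlast' howner hndx
            have hg2 : ((⟨MuForm.box ψ, (MuForm.box ψ).self_mem_subformulas⟩, s) ::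
                l.map (emb ψ)).get ⟨i + 2, hi⟩ = emb ψ (l.get ⟨i + 1, hi'⟩) := by
              simp [List.get_eq_getElem, List.getElem_cons_succ, List.getElem_map]
            rw [hg2, htake, hstep]
            exact happ.1
      have hwf := hfin _ hfp₁ hcf₁
      intro x hx
      rw [← owner_emb R ψ κ x]
      exact hwf (emb ψ x) (by rw [getLast_cons_map ψ _ l hlne hx]; rfl)
  · intro H
    refine ⟨bwdStrat R ψ κ s, ?_, ?_, ?_⟩
    · -- validity
      intro l x hch hlast hown hnd
      by_cases hc : ∃ (s' : S) (l' : List ({χ : MuForm P // χ ∈ ψ.subformulas} × S)),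
          R s s' ∧ l'.head? = some (⟨ψ, ψ.self_mem_subformulas⟩, s') ∧
          l = (⟨MuForm.box ψ, (MuForm.box ψ).self_mem_subformulas⟩, s) :: l'.map (emb ψ)
      · obtain ⟨s', l', hR, hh, hl⟩ := hc
        have hlne : l' ≠ [] := by intro h; rw [h] at hh; simp at hh
        obtain ⟨z, hz⟩ : ∃ z, l'.getLast? = some z := by
          cases hzz : l'.getLast? with
          | none =>
              exfalso
              have := List.getLast?_isSome.mpr hlne
              rw [hzz] at this
              simp at this
          | some z => exact ⟨z, rfl⟩
        have hxz : x = emb ψ z := by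
          rw [hl, getLast_cons_map ψ _ l' hlne hz] at hlast
          injection hlast with h2
          exact h2.symm
        have hch' : l'.Chain' (mcGame R ψ κ).E := by
          rw [hl] at hch
          exact (chain_emb_iff R ψ κ l').mp hch.tail
        have hown' : (mcGame R ψ κ).owner z = 0 := by
          rw [hxz, owner_emb] at hown
          exact hown
        have hnd' : ¬ (mcGame R ψ κ).DeadEnd z := by
          intro hd
          rw [hxz] at hnd
          exact hnd ((dead_emb_iff R ψ κ z).mpr hd)
        have hW := pickStrat_spec R ψ κ s' (H s' hR)
        have hE₂ := hW.1 l' z hch' hz hown' hnd'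
        rw [bwdStrat_eq R ψ κ s hR hh hl, hxz]
        exact (edge_emb_iff R ψ κ z _).mpr hE₂
      · have heq : bwdStrat R ψ κ s l = fb (mcGame R (MuForm.box ψ) κ)
            (⟨MuForm.box ψ, (MuForm.box ψ).self_mem_subformulas⟩, s) l := by
          unfold bwdStrat
          rw [dif_neg hc]
        rw [heq]
        exact fb_spec _ _ hlast hnd
    · -- infinite plays
      intro π₁ h0 hplay hconf
      have h1 := first_lift R ψ κ s (π₁ 1) (by have := hplay 0; rw [h0] at this; exact this)
      have hmem : ∀ n, (π₁ (n + 1)).1.1 ∈ ψ.subformulas := by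
        intro n
        induction n with
        | zero =>
            show (π₁ 1).1.1 ∈ ψ.subformulas
            rw [h1.2]
            exact ψ.self_mem_subformulas
        | succ m ih => exact edge_box_closed R ψ ih (hplay (m + 1))
      set π : ℕ → {χ : MuForm P // χ ∈ ψ.subformulas} × S :=
        fun n => (⟨(π₁ (n + 1)).1.1, hmem n⟩, (π₁ (n + 1)).2) with hπdef
      have hembπ : ∀ n, π₁ (n + 1) = emb ψ (π n) := fun n => emb_eta ψ (π₁ (n + 1)) (hmem n)
      have hπ0 : π 0 = (⟨ψ, ψ.self_mem_subformulas⟩, (π₁ 1).2) :=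
        emb_inj ψ ((hembπ 0).symm.trans h1.2)
      have hplay₂ : (mcGame R ψ κ).InfPlay π := by
        intro i
        refine (edge_emb_iff R ψ κ (π i) (π (i + 1))).mp ?_
        rw [← hembπ i, ← hembπ (i + 1)]
        exact hplay (i + 1)
      have hW := pickStrat_spec R ψ κ (π₁ 1).2 (H (π₁ 1).2 h1.1)
      have hconf₂ : (mcGame R ψ κ).ConformsInf (pickStrat R ψ κ (π₁ 1).2) π := by
        intro i ho
        have ho₁ : (mcGame R (MuForm.box ψ) κ).owner (π₁ (i + 1)) = 0 := by
          rw [hembπ i, owner_emb]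
          exact ho
        have hstep := hconf (i + 1) ho₁
        have hL : (List.ofFn fun j : Fin (i + 2) => π₁ j) =
            (⟨MuForm.box ψ, (MuForm.box ψ).self_mem_subformulas⟩, s) ::
              (List.ofFn fun j : Fin (i + 1) => π j).map (emb ψ) := by
          rw [List.ofFn_succ, List.map_ofFn]
          exact congrArg₂ List.cons h0 (congrArg List.ofFn (funext fun j => hembπ j))
        have hh : (List.ofFn fun j : Fin (i + 1) => π j).head? =
            some (⟨ψ, ψ.self_mem_subformulas⟩, (π₁ 1).2) := by
          rw [List.ofFn_succ]
          simp only [List.head?_cons, Option.some.injEq]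
          exact hπ0
        have hbe := bwdStrat_eq R ψ κ s h1.1 hh hL
        rw [hbe] at hstep
        exact emb_inj ψ (by rw [← hembπ (i + 1)]; exact hstep)
      have hwin₂ := hW.2.1 π hπ0 hplay₂ hconf₂
      exact (winInf_shift (mcGame R (MuForm.box ψ) κ) (mcGame R ψ κ) π₁ π
        (fun n => by rw [hembπ n]; rfl)).mpr hwin₂
    · -- finite plays
      intro l₁ hfp hcf
      obtain ⟨hhead, hch, hdead⟩ := hfp
      cases l₁ with
      | nil => simp at hhead
      | cons a rest =>
          simp only [List.head?_cons, Option.some.injEq] at hhead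
          subst hhead
          cases rest with
          | nil =>
              intro x hx
              simp only [List.getLast?_singleton, Option.mem_def, Option.some.injEq] at hx
              rw [← hx]
              exact owner_v0 R ψ κ s
          | cons b rest₂ =>
              have hE0 : (mcGame R (MuForm.box ψ) κ).E
                  (⟨MuForm.box ψ, (MuForm.box ψ).self_mem_subformulas⟩, s) b := by
                unfold List.Chain' at hch
                rw [List.isChain_cons] at hch
                exact hch.1 b rfl
              obtain ⟨hR, hb⟩ := first_lift R ψ κ s b hE0
              have hch' : (b :: rest₂).Chain' (mcGame R (MuForm.box ψ) κ).E := by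
                unfold List.Chain' at hch
                rw [List.isChain_cons] at hch
                exact hch.2
              obtain ⟨l₂, hrest⟩ := chain_lift R ψ κ rest₂ (⟨ψ, ψ.self_mem_subformulas⟩, b.2)
                (by rw [← hb]; exact hch')
              subst hrest
              have hl₁eq : b :: List.map (emb ψ) l₂ =
                  List.map (emb ψ) ((⟨ψ, ψ.self_mem_subformulas⟩, b.2) :: l₂) := by
                rw [List.map_cons, ← hb]
              rw [hl₁eq] at hcf hdead hch' ⊢
              have hW := pickStrat_spec R ψ κ b.2 (H b.2 hR)
              have hlne : ((⟨ψ, ψ.self_mem_subformulas⟩, b.2) :: l₂) ≠ [] := by simp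
              have hfp₂ : (mcGame R ψ κ).FinPlay (⟨ψ, ψ.self_mem_subformulas⟩, b.2)
                  ((⟨ψ, ψ.self_mem_subformulas⟩, b.2) :: l₂) := by
                refine ⟨rfl, (chain_emb_iff R ψ κ _).mp hch', ?_⟩
                intro x hx
                refine (dead_emb_iff R ψ κ x).mp ?_
                refine hdead (emb ψ x) ?_
                rw [getLast_cons_map ψ _ _ hlne hx]
                rfl
              have hcf₂ : (mcGame R ψ κ).ConformsFin (pickStrat R ψ κ b.2)
                  ((⟨ψ, ψ.self_mem_subformulas⟩, b.2) :: l₂) := by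
                intro i hi ho
                have hi₁ : (i + 1) + 1 <
                    ((⟨MuForm.box ψ, (MuForm.box ψ).self_mem_subformulas⟩, s) ::
                      List.map (emb ψ) ((⟨ψ, ψ.self_mem_subformulas⟩, b.2) :: l₂)).length := by
                  simp only [List.length_cons, List.length_map] at hi ⊢
                  omega
                have hg : ((⟨MuForm.box ψ, (MuForm.box ψ).self_mem_subformulas⟩, s) ::
                    List.map (emb ψ) ((⟨ψ, ψ.self_mem_subformulas⟩, b.2) :: l₂)).get
                      ⟨i + 1, Nat.lt_of_succ_lt hi₁⟩ =
                    emb ψ (((⟨ψ, ψ.self_mem_subformulas⟩, b.2) :: l₂).get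
                      ⟨i, Nat.lt_of_succ_lt hi⟩) := by
                  simp only [List.get_eq_getElem, List.getElem_cons_succ]
                  rw [List.getElem_map]
                have ho₁ : (mcGame R (MuForm.box ψ) κ).owner
                    (((⟨MuForm.box ψ, (MuForm.box ψ).self_mem_subformulas⟩, s) ::
                      List.map (emb ψ) ((⟨ψ, ψ.self_mem_subformulas⟩, b.2) :: l₂)).get
                        ⟨i + 1, Nat.lt_of_succ_lt hi₁⟩) = 0 := by
                  rw [hg, owner_emb]
                  exact ho
                have hstep := hcf (i + 1) hi₁ ho₁
                have htake : ((⟨MuForm.box ψ, (MuForm.box ψ).self_mem_subformulas⟩, s) ::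
                    List.map (emb ψ) ((⟨ψ, ψ.self_mem_subformulas⟩, b.2) :: l₂)).take (i + 2) =
                    (⟨MuForm.box ψ, (MuForm.box ψ).self_mem_subformulas⟩, s) ::
                      (((⟨ψ, ψ.self_mem_subformulas⟩, b.2) :: l₂).take (i + 1)).map (emb ψ) := by
                  simp [List.take_succ_cons, List.map_take]
                have hh' : ((((⟨ψ, ψ.self_mem_subformulas⟩, b.2) :: l₂)).take (i + 1)).head? =
                    some (⟨ψ, ψ.self_mem_subformulas⟩, b.2) := by
                  rw [List.take_succ_cons, List.head?_cons]
                have hbe := bwdStrat_eq R ψ κ s hR hh' rfl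
                have hg2 : ((⟨MuForm.box ψ, (MuForm.box ψ).self_mem_subformulas⟩, s) ::
                    List.map (emb ψ) ((⟨ψ, ψ.self_mem_subformulas⟩, b.2) :: l₂)).get
                      ⟨i + 1 + 1, hi₁⟩ =
                    emb ψ (((⟨ψ, ψ.self_mem_subformulas⟩, b.2) :: l₂).get ⟨i + 1, hi⟩) := by
                  simp only [List.get_eq_getElem, List.getElem_cons_succ]
                  rw [List.getElem_map, List.getElem_cons_succ]
                rw [htake, hbe, hg2] at hstep
                exact emb_inj ψ hstep
              have hwin := hW.2.2 _ hfp₂ hcf₂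
              intro x hx
              obtain ⟨z, hz⟩ : ∃ z, ((⟨ψ, ψ.self_mem_subformulas⟩, b.2) :: l₂).getLast? =
                  some z := by
                cases hzz : ((⟨ψ, ψ.self_mem_subformulas⟩, b.2) :: l₂).getLast? with
                | none =>
                    exfalso
                    have := List.getLast?_isSome.mpr hlne
                    rw [hzz] at this
                    simp at this
                | some z => exact ⟨z, rfl⟩
              rw [getLast_cons_map ψ _ _ hlne hz] at hx
              simp only [Option.mem_def, Option.some.injEq] at hx
              rw [← hx, owner_emb]
              exact hwin z hz
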